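/- Let a < b be real numbers and let f : [a,b] → ℝ be twice differentiable with a real constant m such that m ≤ f''(x) for all x ∈ [a,b]. Then for every x ∈ (a,b), (1/(b−a))·∫_a^b f(t) dt − f((a+b)/2) − m(b−a)²/24 ≥ ((x−a)/(b−a))·( (1/(x−a))·∫_a^x f(t) dt − f((a+x)/2) − m(x−a)²/24 ) ≥ 0. -/

import Mathlib

open MeasureTheory intervalIntegral

lemma my_HH {A B : ℝ} (g : ℝ → ℝ) (hconv : ConvexOn ℝ (Set.Icc A B) g)
    (hcont : ContinuousOn g (Set.Icc A B)) {c d : ℝ} (hcd : c < d)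
    (hsub : Set.Icc c d ⊆ Set.Icc A B) :
    (d - c) * g ((c + d) / 2) ≤ ∫ t in c..d, g t := by
  have h0 : volume (Set.Icc c d) ≠ 0 := by
    simp [Real.volume_Icc, ENNReal.ofReal_eq_zero, not_le, sub_pos, hcd]
  have ht : volume (Set.Icc c d) ≠ ⊤ := by simp [Real.volume_Icc]
  have hfs : ∀ᵐ y ∂(volume.restrict (Set.Icc c d)), id y ∈ Set.Icc A B :=
    ae_restrict_of_forall_mem measurableSet_Icc fun y hy => hsub hy
  have hfi : IntegrableOn (id : ℝ → ℝ) (Set.Icc c d) volume :=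
    (continuous_id.continuousOn).integrableOn_Icc
  have hgi : IntegrableOn (g ∘ id) (Set.Icc c d) volume :=
    (hcont.mono hsub).integrableOn_Icc
  have key := hconv.map_set_average_le hcont isClosed_Icc h0 ht hfs hfi hgi
  have hvol : (volume (Set.Icc c d)).toReal = d - c := by
    simp [Real.volume_Icc, ENNReal.toReal_ofReal (sub_nonneg.2 hcd.le)]
  have h1 : (⨍ y in Set.Icc c d, id y ∂volume) = (c + d) / 2 := by
    rw [setAverage_eq, measureReal_def, hvol]
    have : ∫ y in Set.Icc c d, id y ∂volume = (d ^ 2 - c ^ 2) / 2 := by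
      rw [integral_Icc_eq_integral_Ioc, ← intervalIntegral.integral_of_le hcd.le]
      simpa using integral_id (a := c) (b := d)
    rw [this, smul_eq_mul]
    have hne : d - c ≠ 0 := sub_ne_zero.2 hcd.ne'
    field_simp
    ring
  have h2 : (⨍ y in Set.Icc c d, g (id y) ∂volume) = (d - c)⁻¹ * ∫ t in c..d, g t := by
    rw [setAverage_eq, measureReal_def, hvol]
    rw [integral_Icc_eq_integral_Ioc, ← intervalIntegral.integral_of_le hcd.le]
    simp [smul_eq_mul]
  rw [h1, h2] at key
  have hd : 0 < d - c := sub_pos.2 hcd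
  calc (d - c) * g ((c + d) / 2) ≤ (d - c) * ((d - c)⁻¹ * ∫ t in c..d, g t) :=
        mul_le_mul_of_nonneg_left key hd.le
    _ = ∫ t in c..d, g t := by field_simp

/-- Remark (improvement of (cpn_1), lower part): for twice differentiable `f` with
`m ≤ f''` on `[a,b]`, for all `x ∈ (a,b)`:
`(1/(b−a))∫_a^b f − f((a+b)/2) − m(b−a)²/24
  ≥ ((x−a)/(b−a))·((1/(x−a))∫_a^x f − f((a+x)/2) − m(x−a)²/24) ≥ 0`. -/
theorem fejer_stmt_12 (a b : ℝ) (hab : a < b) (f f' f'' : ℝ → ℝ) (m : ℝ)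
    (hf' : ∀ x ∈ Set.Icc a b, HasDerivWithinAt f (f' x) (Set.Icc a b) x)
    (hf'' : ∀ x ∈ Set.Icc a b, HasDerivWithinAt f' (f'' x) (Set.Icc a b) x)
    (hm : ∀ x ∈ Set.Icc a b, m ≤ f'' x)
    (x : ℝ) (hx : x ∈ Set.Ioo a b) :
    (x - a) / (b - a) * ((1 / (x - a)) * (∫ t in a..x, f t) - f ((a + x) / 2)
          - m * (x - a) ^ 2 / 24)
        ≤ (1 / (b - a)) * (∫ t in a..b, f t) - f ((a + b) / 2) - m * (b - a) ^ 2 / 24 ∧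
    0 ≤ (x - a) / (b - a) * ((1 / (x - a)) * (∫ t in a..x, f t) - f ((a + x) / 2)
          - m * (x - a) ^ 2 / 24) := by
  obtain ⟨hax, hxb⟩ := hx
  have hba : (0:ℝ) < b - a := by linarith
  have hxa : (0:ℝ) < x - a := by linarith
  have hbx : (0:ℝ) < b - x := by linarith
  have hba' : b - a ≠ 0 := hba.ne'
  have hxa' : x - a ≠ 0 := hxa.ne'
  set g : ℝ → ℝ := fun t => f t - m * t ^ 2 / 2 with hg
  -- continuity of f and g on [a,b]
  have hfc : ContinuousOn f (Set.Icc a b) := fun t ht => (hf' t ht).continuousWithinAt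
  have hgc : ContinuousOn g (Set.Icc a b) :=
    hfc.sub ((continuous_const.mul ((continuous_pow 2))).div_const 2).continuousOn
  -- convexity of g
  have hgconv : ConvexOn ℝ (Set.Icc a b) g := by
    apply convexOn_of_hasDerivWithinAt2_nonneg (convex_Icc a b) hgc
      (f' := fun t => f' t - m * t) (f'' := fun t => f'' t - m)
    · intro t ht
      rw [interior_Icc] at ht ⊢
      have h1 : HasDerivAt (fun s : ℝ => m * s ^ 2 / 2) (m * t) t := by
        have := ((hasDerivAt_pow 2 t).const_mul m).div_const 2
        refine this.congr_deriv ?_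
        simp
        ring
      exact ((hf' t (Set.Ioo_subset_Icc_self ht)).mono Set.Ioo_subset_Icc_self).sub
        (h1.hasDerivWithinAt)
    · intro t ht
      rw [interior_Icc] at ht ⊢
      have h1 : HasDerivAt (fun s : ℝ => m * s) m t := by
        simpa using (hasDerivAt_id t).const_mul m
      exact ((hf'' t (Set.Ioo_subset_Icc_self ht)).mono Set.Ioo_subset_Icc_self).sub
        (h1.hasDerivWithinAt)
    · intro t ht
      rw [interior_Icc] at ht
      have := hm t (Set.Ioo_subset_Icc_self ht)
      linarith
  -- integral decomposition
  have hint : ∀ c, a ≤ c → c ≤ b →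
      (∫ t in a..c, f t) = (∫ t in a..c, g t) + m * (c ^ 3 - a ^ 3) / 6 := by
    intro c hac hcb
    have hsub : Set.uIcc a c ⊆ Set.Icc a b := by
      rw [Set.uIcc_of_le hac]
      exact Set.Icc_subset_Icc le_rfl hcb
    have hgi : IntervalIntegrable g volume a c := (hgc.mono hsub).intervalIntegrable
    have hqi : IntervalIntegrable (fun t : ℝ => m * t ^ 2 / 2) volume a c :=
      (((continuous_const.mul (continuous_pow 2)).div_const 2)).intervalIntegrable a c
    have h1 : (∫ t in a..c, f t) = (∫ t in a..c, (g t + m * t ^ 2 / 2)) := by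
      congr 1
      funext t
      simp [hg]
    rw [h1, intervalIntegral.integral_add hgi hqi]
    congr 1
    rw [intervalIntegral.integral_div, intervalIntegral.integral_const_mul, integral_pow]
    norm_num
    ring
  have hintx := hint x hax.le hxb.le
  have hintb := hint b hab.le le_rfl
  -- Hermite-Hadamard on [a,x] and [x,b]
  have HHx : (x - a) * g ((a + x) / 2) ≤ ∫ t in a..x, g t :=
    my_HH g hgconv hgc hax (Set.Icc_subset_Icc le_rfl hxb.le)
  have HHxb : (b - x) * g ((x + b) / 2) ≤ ∫ t in x..b, g t :=
    my_HH g hgconv hgc hxb (Set.Icc_subset_Icc hax.le le_rfl)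
  -- split the integral
  have hsplit : (∫ t in a..b, g t) = (∫ t in a..x, g t) + ∫ t in x..b, g t := by
    rw [intervalIntegral.integral_add_adjacent_intervals]
    · exact (hgc.mono (by rw [Set.uIcc_of_le hax.le]; exact Set.Icc_subset_Icc le_rfl hxb.le)).intervalIntegrable
    · exact (hgc.mono (by rw [Set.uIcc_of_le hxb.le]; exact Set.Icc_subset_Icc hax.le le_rfl)).intervalIntegrable
  -- convexity combination
  have hmem1 : (a + x) / 2 ∈ Set.Icc a b := ⟨by linarith, by linarith⟩
  have hmem2 : (x + b) / 2 ∈ Set.Icc a b := ⟨by linarith, by linarith⟩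
  have hw1 : (0:ℝ) ≤ (x - a) / (b - a) := by positivity
  have hw2 : (0:ℝ) ≤ (b - x) / (b - a) := by positivity
  have hw12 : (x - a) / (b - a) + (b - x) / (b - a) = 1 := by field_simp; ring
  have hc := hgconv.2 hmem1 hmem2 hw1 hw2 hw12
  rw [smul_eq_mul, smul_eq_mul] at hc
  have hpt : (x - a) / (b - a) * ((a + x) / 2) + (b - x) / (b - a) * ((x + b) / 2)
      = (a + b) / 2 := by field_simp; ring
  rw [hpt] at hc
  have key : (b - a) * g ((a + b) / 2) ≤ (x - a) * g ((a + x) / 2) + ∫ t in x..b, g t := by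
    have h1 : (b - a) * g ((a + b) / 2)
        ≤ (b - a) * ((x - a) / (b - a) * g ((a + x) / 2) + (b - x) / (b - a) * g ((x + b) / 2)) :=
      mul_le_mul_of_nonneg_left hc hba.le
    have h2 : (b - a) * ((x - a) / (b - a) * g ((a + x) / 2) + (b - x) / (b - a) * g ((x + b) / 2))
        = (x - a) * g ((a + x) / 2) + (b - x) * g ((x + b) / 2) := by
      field_simp
    rw [h2] at h1
    linarith
  -- rewrite both sides in terms of g
  have hf_midx : f ((a + x) / 2) = g ((a + x) / 2) + m * ((a + x) / 2) ^ 2 / 2 := by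
    simp [hg]
  have hf_midb : f ((a + b) / 2) = g ((a + b) / 2) + m * ((a + b) / 2) ^ 2 / 2 := by
    simp [hg]
  have ex : (x - a) / (b - a) * ((1 / (x - a)) * (∫ t in a..x, f t) - f ((a + x) / 2)
        - m * (x - a) ^ 2 / 24)
      = (x - a) / (b - a) * ((1 / (x - a)) * (∫ t in a..x, g t) - g ((a + x) / 2)) := by
    rw [hintx, hf_midx]
    field_simp
    ring
  have exb : (1 / (b - a)) * (∫ t in a..b, f t) - f ((a + b) / 2) - m * (b - a) ^ 2 / 24
      = (1 / (b - a)) * (∫ t in a..b, g t) - g ((a + b) / 2) := by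
    rw [hintb, hf_midb]
    field_simp
    ring
  rw [ex, exb]
  constructor
  · rw [hsplit]
    have expand : (1 / (b - a)) * ((∫ t in a..x, g t) + ∫ t in x..b, g t) - g ((a + b) / 2)
        - (x - a) / (b - a) * ((1 / (x - a)) * (∫ t in a..x, g t) - g ((a + x) / 2))
        = (1 / (b - a)) * ((∫ t in x..b, g t) + (x - a) * g ((a + x) / 2)
            - (b - a) * g ((a + b) / 2)) := by
      field_simp
      ring
    have hnn : (0:ℝ) ≤ (1 / (b - a)) * ((∫ t in x..b, g t) + (x - a) * g ((a + x) / 2)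
        - (b - a) * g ((a + b) / 2)) :=
      mul_nonneg (by positivity) (by linarith)
    linarith [expand, hnn]
  · have hE : g ((a + x) / 2) ≤ (1 / (x - a)) * (∫ t in a..x, g t) := by
      rw [one_div, ← div_eq_inv_mul]
      exact (le_div_iff₀ hxa).2 (by linarith)
    have : (0:ℝ) ≤ (1 / (x - a)) * (∫ t in a..x, g t) - g ((a + x) / 2) := by linarith
    positivity
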